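/- Let (S, L, τ, ℓ) be a finitely branching labelled Markov chain over a countable state space and s, t ∈ S with d(s,t) < 1. Then there exists a policy T such that for every ε > 0 there exists a pair (u,v) ∈ S² with d(u,v) ≤ ε that is reachable with positive probability from (s,t) in the Markov chain on pairs induced by T. -/

import Mathlib

open scoped ENNReal Classical

/-- `ω` is a coupling of `μ` and `ν`. -/
def IsCoupling {S : Type*} (μ ν : S → ℝ≥0∞) (ω : S × S → ℝ≥0∞) : Prop :=
  (∀ s, (∑' t, ω (s, t)) = μ s) ∧ (∀ t, (∑' s, ω (s, t)) = ν t)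

/-- `r` is a probabilistic bisimulation on the LMC with transitions `τ` and labels `ℓ`. -/
def IsBisimulation {S L : Type*} (τ : S → S → ℝ≥0∞) (ℓ : S → L) (r : S → S → Prop) : Prop :=
  Equivalence r ∧ ∀ s t, r s t → ℓ s = ℓ t ∧
    ∀ u, (∑' v : {v // r u v}, τ s v) = (∑' v : {v // r u v}, τ t v)

/-- Probabilistic bisimilarity: the largest probabilistic bisimulation. -/
def Bisim {S L : Type*} (τ : S → S → ℝ≥0∞) (ℓ : S → L) (s t : S) : Prop :=
  ∃ r, IsBisimulation τ ℓ r ∧ r s t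

/-- The distance operator `Δ`. -/
noncomputable def Delta {S L : Type*} (τ : S → S → ℝ≥0∞) (ℓ : S → L)
    (e : S → S → ℝ≥0∞) (s t : S) : ℝ≥0∞ :=
  if ℓ s ≠ ℓ t then 1
  else ⨅ ω ∈ {ω | IsCoupling (τ s) (τ t) ω}, ∑' p : S × S, ω p * e p.1 p.2

/-- A policy: a coupling for every same-labelled, non-bisimilar pair. -/
def IsPolicy {S L : Type*} (τ : S → S → ℝ≥0∞) (ℓ : S → L)
    (T : S → S → S × S → ℝ≥0∞) : Prop :=
  ∀ s t, ℓ s = ℓ t → ¬ Bisim τ ℓ s t → IsCoupling (τ s) (τ t) (T s t)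

/-- The operator `Θ^T` induced by a policy `T`. -/
noncomputable def Theta {S L : Type*} (τ : S → S → ℝ≥0∞) (ℓ : S → L)
    (T : S → S → S × S → ℝ≥0∞) (e : S → S → ℝ≥0∞) (s t : S) : ℝ≥0∞ :=
  if Bisim τ ℓ s t then 0
  else if ℓ s ≠ ℓ t then 1
  else ∑' p : S × S, T s t p * e p.1 p.2

/-- `x` is the least (pre-)fixed point of `f`. -/
def IsLfp {α : Type*} [Preorder α] (f : α → α) (x : α) : Prop :=
  f x ≤ x ∧ ∀ y, f y ≤ y → x ≤ y

/-- Probability of reaching the target set `Z` in exactly `n` steps in the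
Markov chain on pairs induced by a policy `T`, where bisimilar pairs and
differently-labelled pairs are absorbing. -/
noncomputable def reachN {S L : Type*} (τ : S → S → ℝ≥0∞) (ℓ : S → L)
    (T : S → S → S × S → ℝ≥0∞) (Z : S × S → Prop) : ℕ → S × S → ℝ≥0∞
  | 0, p => if Z p then 1 else 0
  | n + 1, p =>
      if Z p ∨ Bisim τ ℓ p.1 p.2 ∨ ℓ p.1 ≠ ℓ p.2 then 0
      else ∑' q : S × S, T p.1 p.2 q * reachN τ ℓ T Z n q

/-- Probability of ever reaching the target set `Z` from a pair. -/
noncomputable def Reach {S L : Type*} (τ : S → S → ℝ≥0∞) (ℓ : S → L)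
    (T : S → S → S × S → ℝ≥0∞) (Z : S × S → Prop) (p : S × S) : ℝ≥0∞ :=
  ∑' n : ℕ, reachN τ ℓ T Z n p

/-! ### Auxiliary definitions -/

/-- One step of the pair chain induced by a policy, with bisimilar and
differently-labelled pairs absorbing (killed). -/
noncomputable def pstep {S L : Type*} (τ : S → S → ℝ≥0∞) (ℓ : S → L)
    (T : S → S → S × S → ℝ≥0∞) (e : S × S → ℝ≥0∞) : S × S → ℝ≥0∞ := fun p =>
  if Bisim τ ℓ p.1 p.2 ∨ ℓ p.1 ≠ ℓ p.2 then 0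
  else ∑' q : S × S, T p.1 p.2 q * e q

/-- Iterated step operator. -/
noncomputable def pstepN {S L : Type*} (τ : S → S → ℝ≥0∞) (ℓ : S → L)
    (T : S → S → S × S → ℝ≥0∞) : ℕ → (S × S → ℝ≥0∞) → S × S → ℝ≥0∞
  | 0, e => e
  | n + 1, e => pstep τ ℓ T (pstepN τ ℓ T n e)

/-- Indicator of differently-labelled pairs. -/
noncomputable def bad0 {S L : Type*} (ℓ : S → L) : S × S → ℝ≥0∞ := fun p =>
  if ℓ p.1 ≠ ℓ p.2 then 1 else 0

/-- Indicator of absorbing pairs. -/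
noncomputable def abs0 {S L : Type*} (τ : S → S → ℝ≥0∞) (ℓ : S → L) : S × S → ℝ≥0∞ := fun p =>
  if Bisim τ ℓ p.1 p.2 ∨ ℓ p.1 ≠ ℓ p.2 then 1 else 0

section aux
variable {S L : Type*} (τ : S → S → ℝ≥0∞) (ℓ : S → L)

lemma bisim_label {s t : S} (h : Bisim τ ℓ s t) : ℓ s = ℓ t := by
  obtain ⟨r, hr, hst⟩ := h; exact (hr.2 s t hst).1

lemma delta_mono : Monotone (Delta τ ℓ) := by
  intro e f hef s t
  unfold Delta
  split
  · exact le_rfl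
  · exact iInf₂_mono fun ω _ => ENNReal.tsum_le_tsum fun p =>
      mul_le_mul_right (hef p.1 p.2) _

lemma prod_coupling (hdistr : ∀ s, (∑' t, τ s t) = 1) (s t : S) :
    IsCoupling (τ s) (τ t) (fun p => τ s p.1 * τ t p.2) := by
  constructor
  · intro u; simp [ENNReal.tsum_mul_left, hdistr t]
  · intro v; simp [ENNReal.tsum_mul_right, hdistr s]

lemma delta_apply_of_eq {e : S → S → ℝ≥0∞} {s t : S} (h : ℓ s = ℓ t) :
    Delta τ ℓ e s t = ⨅ ω ∈ {ω | IsCoupling (τ s) (τ t) ω}, ∑' p : S × S, ω p * e p.1 p.2 := by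
  simp [Delta, h]

lemma delta_le_coupling {e : S → S → ℝ≥0∞} {s t : S} (h : ℓ s = ℓ t)
    {ω : S × S → ℝ≥0∞} (hω : IsCoupling (τ s) (τ t) ω) :
    Delta τ ℓ e s t ≤ ∑' p : S × S, ω p * e p.1 p.2 := by
  rw [delta_apply_of_eq τ ℓ h]; exact iInf₂_le ω hω

variable {d : S → S → ℝ≥0∞}

lemma d_fixed (hd : IsLfp (Delta τ ℓ) d) : Delta τ ℓ d = d :=
  le_antisymm hd.1 (hd.2 _ (delta_mono τ ℓ hd.1))

lemma d_le_one (hdistr : ∀ s, (∑' t, τ s t) = 1) (hd : IsLfp (Delta τ ℓ) d)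
    (s t : S) : d s t ≤ 1 := by
  have h1 : Delta τ ℓ (fun _ _ => 1) ≤ fun _ _ => 1 := by
    intro s t
    unfold Delta
    split
    · exact le_rfl
    · refine le_trans (iInf₂_le _ (prod_coupling τ hdistr s t)) ?_
      simp only [mul_one]
      rw [ENNReal.tsum_prod']
      simp [ENNReal.tsum_mul_left, hdistr]
  exact hd.2 _ h1 s t

lemma d_bad (hd : IsLfp (Delta τ ℓ) d) {s t : S} (h : ℓ s ≠ ℓ t) : d s t = 1 := by
  have := congrFun (congrFun (d_fixed τ ℓ hd) s) t
  rw [← this]; simp [Delta, h]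

lemma bisim_coupling (hdistr : ∀ s, (∑' t, τ s t) = 1) {s t : S} (h : Bisim τ ℓ s t) :
    ∃ ω, IsCoupling (τ s) (τ t) ω ∧ ∀ p : S × S, ω p ≠ 0 → Bisim τ ℓ p.1 p.2 := by
  obtain ⟨r, hr, hst⟩ := h
  set m : S → ℝ≥0∞ := fun u => ∑' v, if r u v then τ t v else 0 with hm
  set ms : S → ℝ≥0∞ := fun u => ∑' v, if r u v then τ s v else 0 with hms
  have hsub : ∀ (f : S → ℝ≥0∞) (u : S),
      (∑' v : {v // r u v}, f v) = ∑' v, if r u v then f v else 0 := by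
    intro f u
    exact (tsum_subtype {v | r u v} f).trans (tsum_congr fun v => by
      by_cases hv : r u v <;> simp [Set.indicator, hv])
  have hkey : ∀ u, ms u = m u := by
    intro u
    have := (hr.2 s t hst).2 u
    rw [hsub (τ s) u, hsub (τ t) u] at this
    exact this
  have hmle : ∀ u, m u ≤ 1 := by
    intro u
    calc m u ≤ ∑' v, τ t v := ENNReal.tsum_le_tsum fun v => by split <;> simp
    _ = 1 := hdistr t
  have hmne : ∀ u, m u ≠ ∞ := fun u => (lt_of_le_of_lt (hmle u) (by norm_num)).ne
  have hmcongr : ∀ u v, r u v → m u = m v := by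
    intro u v huv
    exact tsum_congr fun w => by
      by_cases hw : r u w
      · simp [hw, hr.1.trans (hr.1.symm huv) hw]
      · rw [if_neg hw, if_neg (fun hvw => hw (hr.1.trans huv hvw))]
  refine ⟨fun p => if r p.1 p.2 then τ s p.1 * τ t p.2 / m p.1 else 0, ⟨?_, ?_⟩, ?_⟩
  · intro u
    have : (∑' v, if r u v then τ s u * τ t v / m u else 0)
        = (τ s u / m u) * m u := by
      rw [hm]
      rw [← ENNReal.tsum_mul_left]
      exact tsum_congr fun v => by
        by_cases hv : r u v
        · simp [hv, div_eq_mul_inv]; ring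
        · simp [hv]
    simp only [this]
    by_cases h0 : m u = 0
    · have hτ : τ s u = 0 := by
        have : τ s u ≤ ms u := by
          refine le_trans ?_ (ENNReal.le_tsum u)
          simp [hr.1.refl u]
        simpa [hkey u, h0] using this
      simp [hτ, h0]
    · exact ENNReal.div_mul_cancel h0 (hmne u)
  · intro v
    have : (∑' u, if r u v then τ s u * τ t v / m u else 0)
        = (τ t v / m v) * ms v := by
      rw [hms, ← ENNReal.tsum_mul_left]
      exact tsum_congr fun u => by
        by_cases hu : r u v
        · rw [if_pos hu, if_pos (hr.1.symm hu), hmcongr u v hu, div_eq_mul_inv,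
            div_eq_mul_inv]
          ring
        · rw [if_neg hu, if_neg (fun hvu => hu (hr.1.symm hvu)), mul_zero]
    simp only [this, hkey]
    by_cases h0 : m v = 0
    · have hτ : τ t v = 0 := by
        have : τ t v ≤ m v := by
          refine le_trans ?_ (ENNReal.le_tsum v)
          simp [hr.1.refl v]
        simpa [h0] using this
      simp [hτ, h0]
    · exact ENNReal.div_mul_cancel h0 (hmne v)
  · intro p hp
    by_cases hrp : r p.1 p.2
    · exact ⟨r, hr, hrp⟩
    · simp [hrp] at hp

lemma d_bisim (hdistr : ∀ s, (∑' t, τ s t) = 1) (hd : IsLfp (Delta τ ℓ) d)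
    {s t : S} (h : Bisim τ ℓ s t) : d s t = 0 := by
  set e : S → S → ℝ≥0∞ := fun u v => if Bisim τ ℓ u v then 0 else d u v with he
  have hed : e ≤ d := by
    intro u v
    by_cases hb : Bisim τ ℓ u v <;> simp [he, hb]
  have hkey : Delta τ ℓ e ≤ e := by
    intro u v
    by_cases hb : Bisim τ ℓ u v
    · obtain ⟨ω, hω, hsupp⟩ := bisim_coupling τ ℓ hdistr hb
      have h1 : Delta τ ℓ e u v ≤ ∑' p : S × S, ω p * e p.1 p.2 :=
        delta_le_coupling τ ℓ (bisim_label τ ℓ hb) hω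
      have h2 : (∑' p : S × S, ω p * e p.1 p.2) = 0 := by
        rw [ENNReal.tsum_eq_zero]
        intro p
        by_cases h0 : ω p = 0
        · simp [h0]
        · simp [he, hsupp p h0]
      have h3 : Delta τ ℓ e u v ≤ 0 := by rw [← h2]; exact h1
      exact le_trans h3 zero_le
    · calc Delta τ ℓ e u v ≤ Delta τ ℓ d u v := delta_mono τ ℓ hed u v
      _ = d u v := congrFun (congrFun (d_fixed τ ℓ hd) u) v
      _ = e u v := by simp [he, hb]
  have := hd.2 e hkey s t
  simpa [he, h] using this

lemma opt_coupling (hdistr : ∀ s, (∑' t, τ s t) = 1)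
    (hfin : ∀ s, {t | τ s t ≠ 0}.Finite)
    (hd1 : ∀ u v, d u v ≤ 1) (s t : S) (hl : ℓ s = ℓ t) :
    ∃ ω, IsCoupling (τ s) (τ t) ω ∧
      (∑' p : S × S, ω p * d p.1 p.2) ≤ Delta τ ℓ d s t := by
  classical
  set Ks := (hfin s).toFinset with hKs
  set Kt := (hfin t).toFinset with hKt
  set C : Set (S × S → ℝ≥0∞) := {ω | IsCoupling (τ s) (τ t) ω} with hC
  set X : Set (S × S → ℝ≥0∞) :=
    {ω | ∀ p : S × S, (τ s p.1 = 0 ∨ τ t p.2 = 0) → ω p = 0} with hX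
  have hCX : C ⊆ X := by
    rintro ω ⟨hrow, hcol⟩ p hp
    rcases hp with hp | hp
    · have : ω p ≤ τ s p.1 := by
        rw [← hrow p.1]; exact le_trans (le_of_eq (by rfl)) (ENNReal.le_tsum p.2)
      simpa [hp] using this
    · have : ω p ≤ τ t p.2 := by
        rw [← hcol p.2]; exact le_trans (le_of_eq (by rfl)) (ENNReal.le_tsum p.1)
      simpa [hp] using this
  have hrowX : ∀ ω ∈ X, ∀ u, (∑' v, ω (u, v)) = ∑ v ∈ Kt, ω (u, v) := by
    intro ω hω u
    refine tsum_eq_sum fun v hv => hω (u, v) (Or.inr ?_)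
    simpa [hKt] using hv
  have hcolX : ∀ ω ∈ X, ∀ v, (∑' u, ω (u, v)) = ∑ u ∈ Ks, ω (u, v) := by
    intro ω hω v
    refine tsum_eq_sum fun u hu => hω (u, v) (Or.inl ?_)
    simpa [hKs] using hu
  have hboxX : ∀ ω ∈ X, (∑' p : S × S, ω p * d p.1 p.2)
      = ∑ p ∈ Ks ×ˢ Kt, ω p * d p.1 p.2 := by
    intro ω hω
    refine tsum_eq_sum fun p hp => ?_
    rw [Finset.mem_product, not_and_or] at hp
    have : ω p = 0 := by
      refine hω p ?_
      rcases hp with hp | hp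
      · exact Or.inl (by simpa [hKs] using hp)
      · exact Or.inr (by simpa [hKt] using hp)
    simp [this]
  have hXc : IsClosed X := by
    have : X = ⋂ p : S × S, {ω : S × S → ℝ≥0∞ | (τ s p.1 = 0 ∨ τ t p.2 = 0) → ω p = 0} := by
      ext ω; simp [hX, Set.mem_iInter]
    rw [this]
    refine isClosed_iInter fun p => ?_
    by_cases hc : τ s p.1 = 0 ∨ τ t p.2 = 0
    · have : {ω : S × S → ℝ≥0∞ | (τ s p.1 = 0 ∨ τ t p.2 = 0) → ω p = 0}
          = (fun ω : S × S → ℝ≥0∞ => ω p) ⁻¹' {0} := by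
        ext ω; simp [hc]
      rw [this]
      exact isClosed_singleton.preimage (continuous_apply p)
    · have : {ω : S × S → ℝ≥0∞ | (τ s p.1 = 0 ∨ τ t p.2 = 0) → ω p = 0} = Set.univ := by
        ext ω; simp [hc]
      rw [this]; exact isClosed_univ
  have hCc : IsClosed C := by
    have hCeq : C = X ∩ ((⋂ u, {ω : S × S → ℝ≥0∞ | ∑ v ∈ Kt, ω (u, v) = τ s u})
        ∩ (⋂ v, {ω : S × S → ℝ≥0∞ | ∑ u ∈ Ks, ω (u, v) = τ t v})) := by
      ext ω
      constructor
      · intro hω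
        have hωX := hCX hω
        refine ⟨hωX, ⟨Set.mem_iInter.2 fun u => ?_, Set.mem_iInter.2 fun v => ?_⟩⟩
        · show ∑ v ∈ Kt, ω (u, v) = τ s u
          rw [← hrowX ω hωX u]; exact hω.1 u
        · show ∑ u ∈ Ks, ω (u, v) = τ t v
          rw [← hcolX ω hωX v]; exact hω.2 v
      · rintro ⟨hωX, h1, h2⟩
        constructor
        · intro u; rw [hrowX ω hωX u]; exact Set.mem_iInter.1 h1 u
        · intro v; rw [hcolX ω hωX v]; exact Set.mem_iInter.1 h2 v
    rw [hCeq]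
    refine hXc.inter (IsClosed.inter ?_ ?_)
    · refine isClosed_iInter fun u => ?_
      have : Continuous (fun ω : S × S → ℝ≥0∞ => ∑ v ∈ Kt, ω (u, v)) :=
        continuous_finset_sum _ fun v _ => continuous_apply (u, v)
      exact isClosed_singleton.preimage this
    · refine isClosed_iInter fun v => ?_
      have : Continuous (fun ω : S × S → ℝ≥0∞ => ∑ u ∈ Ks, ω (u, v)) :=
        continuous_finset_sum _ fun u _ => continuous_apply (u, v)
      exact isClosed_singleton.preimage this
  have hCne : C.Nonempty := ⟨fun p => τ s p.1 * τ t p.2, prod_coupling τ hdistr s t⟩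
  set G : (S × S → ℝ≥0∞) → ℝ≥0∞ := fun ω => ∑ p ∈ Ks ×ˢ Kt, ω p * d p.1 p.2 with hG
  have hGc : Continuous G := by
    refine continuous_finset_sum _ fun p _ => ?_
    exact (ENNReal.continuous_mul_const
      (lt_of_le_of_lt (hd1 p.1 p.2) (by norm_num)).ne).comp (continuous_apply p)
  obtain ⟨ω₀, hω₀, hmin⟩ := hCc.isCompact.exists_isMinOn hCne hGc.continuousOn
  refine ⟨ω₀, hω₀, ?_⟩
  have heq : ∀ ω ∈ C, (∑' p : S × S, ω p * d p.1 p.2) = G ω := fun ω hω => hboxX ω (hCX hω)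
  rw [delta_apply_of_eq τ ℓ hl]
  refine le_iInf₂ fun ω hω => ?_
  rw [heq ω₀ hω₀, heq ω hω]
  exact isMinOn_iff.1 hmin ω hω

/-! ### Properties of the step operator -/

variable (T : S → S → S × S → ℝ≥0∞)

lemma reachN_zero (Z : S × S → Prop) (p : S × S) :
    reachN τ ℓ T Z 0 p = if Z p then 1 else 0 := by rw [reachN]

lemma reachN_succ (Z : S × S → Prop) (n : ℕ) (p : S × S) :
    reachN τ ℓ T Z (n + 1) p = if Z p ∨ Bisim τ ℓ p.1 p.2 ∨ ℓ p.1 ≠ ℓ p.2 then 0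
      else ∑' q : S × S, T p.1 p.2 q * reachN τ ℓ T Z n q := by rw [reachN]

lemma pstepN_step_comm (e : S × S → ℝ≥0∞) :
    ∀ n, pstepN τ ℓ T n (pstep τ ℓ T e) = pstepN τ ℓ T (n + 1) e := by
  intro n
  induction n with
  | zero => rfl
  | succ n ih => show pstep τ ℓ T _ = pstep τ ℓ T _; rw [ih]

lemma pstep_add (e f : S × S → ℝ≥0∞) :
    pstep τ ℓ T (fun q => e q + f q) = fun p => pstep τ ℓ T e p + pstep τ ℓ T f p := by
  funext p
  unfold pstep
  split
  · simp
  · rw [← ENNReal.tsum_add]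
    exact tsum_congr fun q => mul_add _ _ _

lemma pstepN_add (e f : S × S → ℝ≥0∞) :
    ∀ n, pstepN τ ℓ T n (fun q => e q + f q)
      = fun p => pstepN τ ℓ T n e p + pstepN τ ℓ T n f p := by
  intro n
  induction n with
  | zero => rfl
  | succ n ih =>
    show pstep τ ℓ T _ = _
    rw [ih]
    exact pstep_add τ ℓ T _ _

lemma pstep_mul (c : ℝ≥0∞) (e : S × S → ℝ≥0∞) :
    pstep τ ℓ T (fun q => c * e q) = fun p => c * pstep τ ℓ T e p := by
  funext p
  unfold pstep
  split
  · simp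
  · rw [← ENNReal.tsum_mul_left]
    exact tsum_congr fun q => by ring

lemma pstepN_mul (c : ℝ≥0∞) (e : S × S → ℝ≥0∞) :
    ∀ n, pstepN τ ℓ T n (fun q => c * e q) = fun p => c * pstepN τ ℓ T n e p := by
  intro n
  induction n with
  | zero => rfl
  | succ n ih =>
    show pstep τ ℓ T _ = _
    rw [ih]
    exact pstep_mul τ ℓ T _ _

lemma pstepN_mono_on (A : Set (S × S))
    (hcl : ∀ p ∈ A, ¬(Bisim τ ℓ p.1 p.2 ∨ ℓ p.1 ≠ ℓ p.2) →
      ∀ q, T p.1 p.2 q ≠ 0 → q ∈ A)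
    {e f : S × S → ℝ≥0∞} (hef : ∀ p ∈ A, e p ≤ f p) :
    ∀ n, ∀ p ∈ A, pstepN τ ℓ T n e p ≤ pstepN τ ℓ T n f p := by
  intro n
  induction n with
  | zero => exact hef
  | succ n ih =>
    intro p hp
    show pstep τ ℓ T _ p ≤ pstep τ ℓ T _ p
    unfold pstep
    split
    · exact le_rfl
    · rename_i habs
      refine ENNReal.tsum_le_tsum fun q => ?_
      by_cases hq : T p.1 p.2 q = 0
      · simp [hq]
      · exact mul_le_mul_right (ih q (hcl p hp habs q hq)) _

lemma reachN_bad_eq :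
    ∀ n, reachN τ ℓ T (fun p => ℓ p.1 ≠ ℓ p.2) n = pstepN τ ℓ T n (bad0 ℓ) := by
  intro n
  induction n with
  | zero => funext p; rw [reachN_zero]; simp [pstepN, bad0]
  | succ n ih =>
    funext p
    rw [reachN_succ]
    show _ = pstep τ ℓ T (pstepN τ ℓ T n (bad0 ℓ)) p
    rw [← ih]
    unfold pstep
    by_cases h : Bisim τ ℓ p.1 p.2 ∨ ℓ p.1 ≠ ℓ p.2
    · rw [if_pos h, if_pos (by tauto)]
    · rw [if_neg h, if_neg (by tauto)]

/-! ### Reachability lemmas -/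

lemma reach_self (w : S × S) : Reach τ ℓ T (fun x => x = w) w ≠ 0 := by
  have h1 : (1 : ℝ≥0∞) ≤ Reach τ ℓ T (fun x => x = w) w := by
    refine le_trans (le_of_eq ?_) (ENNReal.le_tsum 0)
    rw [reachN_zero]
    simp
  intro h0
  rw [h0] at h1
  exact (by norm_num : ¬ (1:ℝ≥0∞) ≤ 0) h1

lemma reach_lift (q q' w : S × S)
    (hw : ¬(Bisim τ ℓ w.1 w.2 ∨ ℓ w.1 ≠ ℓ w.2))
    (hT : T w.1 w.2 q' ≠ 0)
    (h : Reach τ ℓ T (fun x => x = q) q' ≠ 0) :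
    Reach τ ℓ T (fun x => x = q) w ≠ 0 := by
  by_cases hwq : w = q
  · subst hwq; exact reach_self τ ℓ T w
  · obtain ⟨m, hm⟩ : ∃ m, reachN τ ℓ T (fun x => x = q) m q' ≠ 0 := by
      by_contra hall
      push_neg at hall
      exact h (by simp [Reach, ENNReal.tsum_eq_zero, hall])
    have hle : T w.1 w.2 q' * reachN τ ℓ T (fun x => x = q) m q'
        ≤ reachN τ ℓ T (fun x => x = q) (m + 1) w := by
      rw [reachN_succ]
      rw [if_neg (by tauto : ¬((w = q) ∨ Bisim τ ℓ w.1 w.2 ∨ ℓ w.1 ≠ ℓ w.2))]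
      exact ENNReal.le_tsum q'
    intro h0
    have hz : reachN τ ℓ T (fun x => x = q) (m + 1) w = 0 := by
      have hk := ENNReal.le_tsum (f := fun n => reachN τ ℓ T (fun x => x = q) n w) (m + 1)
      rw [show (∑' n, reachN τ ℓ T (fun x => x = q) n w) = 0 from h0] at hk
      exact le_antisymm hk zero_le
    rw [hz] at hle
    exact (mul_ne_zero hT hm) (le_antisymm hle zero_le)

lemma reach_step (p q : S × S)
    (hp : ¬(Bisim τ ℓ p.1 p.2 ∨ ℓ p.1 ≠ ℓ p.2))
    (hT : T p.1 p.2 q ≠ 0) :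
    ∀ n (w : S × S), reachN τ ℓ T (fun x => x = p) n w ≠ 0 →
      Reach τ ℓ T (fun x => x = q) w ≠ 0 := by
  intro n
  induction n with
  | zero =>
    intro w hw
    have hwp : w = p := by
      by_contra hne
      exact hw (by rw [reachN_zero]; simp [hne])
    subst hwp
    exact reach_lift τ ℓ T q q w hp hT (reach_self τ ℓ T q)
  | succ n ih =>
    intro w hw
    have hcond : ¬((w = p) ∨ Bisim τ ℓ w.1 w.2 ∨ ℓ w.1 ≠ ℓ w.2) := by
      intro hc
      exact hw (by rw [reachN_succ, if_pos hc])
    have hsum : (∑' x : S × S, T w.1 w.2 x * reachN τ ℓ T (fun x => x = p) n x) ≠ 0 := by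
      intro h0
      refine hw ?_
      rw [reachN_succ, if_neg hcond]
      exact h0
    obtain ⟨q', hq'⟩ : ∃ q', T w.1 w.2 q' * reachN τ ℓ T (fun x => x = p) n q' ≠ 0 := by
      by_contra hall
      push_neg at hall
      exact hsum (by rw [ENNReal.tsum_eq_zero]; exact hall)
    have hT' : T w.1 w.2 q' ≠ 0 := fun h => hq' (by simp [h])
    have hr' : reachN τ ℓ T (fun x => x = p) n q' ≠ 0 := fun h => hq' (by simp [h])
    exact reach_lift τ ℓ T q q' w (by tauto) hT' (ih q' hr')

end aux

/-- If `d(s,t) < 1` then there is a policy `T` such that for every `ε > 0`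
some pair `(u,v)` with `d(u,v) ≤ ε` is reachable with positive probability
from `(s,t)` in the induced pair Markov chain. -/
theorem stmt13 {S L : Type*} [Countable S] [Finite L]
    (τ : S → S → ℝ≥0∞) (ℓ : S → L)
    (hdistr : ∀ s, (∑' t, τ s t) = 1)
    (hfin : ∀ s, {t | τ s t ≠ 0}.Finite)
    (d : S → S → ℝ≥0∞) (hd : IsLfp (Delta τ ℓ) d)
    (s t : S) (hst : d s t < 1) :
    ∃ T : S → S → S × S → ℝ≥0∞, IsPolicy τ ℓ T ∧
      ∀ ε : ℝ≥0∞, 0 < ε → ∃ u v : S, d u v ≤ ε ∧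
        0 < Reach τ ℓ T (fun p => p = (u, v)) (s, t) := by
  classical
  have hd1 : ∀ u v, d u v ≤ 1 := d_le_one τ ℓ hdistr hd
  have hdΔ : Delta τ ℓ d = d := d_fixed τ ℓ hd
  -- construct the optimal policy
  set T : S → S → S × S → ℝ≥0∞ := fun u v =>
    if h : ℓ u = ℓ v then Classical.choose (opt_coupling τ ℓ hdistr hfin hd1 u v h)
    else fun _ => 0 with hT
  have hTspec : ∀ u v (h : ℓ u = ℓ v),
      IsCoupling (τ u) (τ v) (T u v) ∧
      (∑' p : S × S, T u v p * d p.1 p.2) ≤ d u v := by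
    intro u v h
    have hc := Classical.choose_spec (opt_coupling τ ℓ hdistr hfin hd1 u v h)
    have hTe : T u v = Classical.choose (opt_coupling τ ℓ hdistr hfin hd1 u v h) := by
      simp [hT, h]
    rw [hTe]
    refine ⟨hc.1, le_trans hc.2 ?_⟩
    rw [hdΔ]
  have hpol : IsPolicy τ ℓ T := fun u v h _ => (hTspec u v h).1
  refine ⟨T, hpol, ?_⟩
  intro ε hε
  by_contra hcon
  push_neg at hcon
  -- the set of pairs reachable from (s,t)
  set A : Set (S × S) := {p | Reach τ ℓ T (fun x => x = p) (s, t) ≠ 0} with hA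
  have hstA : (s, t) ∈ A := reach_self τ ℓ T (s, t)
  have hAd : ∀ p ∈ A, ε < d p.1 p.2 := by
    intro p hp
    by_contra hle
    push_neg at hle
    have := hcon p.1 p.2 hle
    exact hp (by simpa using le_antisymm this zero_le)
  have hAnb : ∀ p ∈ A, ¬ Bisim τ ℓ p.1 p.2 := by
    intro p hp hb
    have h0 : d p.1 p.2 = 0 := d_bisim τ ℓ hdistr hd hb
    have := hAd p hp
    rw [h0] at this
    exact (not_lt_of_ge zero_le) this
  have hcl : ∀ p ∈ A, ¬(Bisim τ ℓ p.1 p.2 ∨ ℓ p.1 ≠ ℓ p.2) →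
      ∀ q, T p.1 p.2 q ≠ 0 → q ∈ A := by
    intro p hp hnabs q hq
    obtain ⟨n, hn⟩ : ∃ n, reachN τ ℓ T (fun x => x = p) n (s, t) ≠ 0 := by
      by_contra hall
      push_neg at hall
      exact hp (by simp [Reach, ENNReal.tsum_eq_zero, hall])
    exact reach_step τ ℓ T p q hnabs hq n (s, t) hn
  -- the one-step identities
  set D : S × S → ℝ≥0∞ := fun q => d q.1 q.2 with hD
  set one : S × S → ℝ≥0∞ := fun _ => 1 with hone
  have honestep_d : D = fun p => bad0 ℓ p + pstep τ ℓ T D p := by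
    funext p
    by_cases hlp : ℓ p.1 ≠ ℓ p.2
    · rw [hD]
      show d p.1 p.2 = _
      rw [d_bad τ ℓ hd hlp]
      simp [bad0, pstep, hlp]
    · push_neg at hlp
      by_cases hb : Bisim τ ℓ p.1 p.2
      · show d p.1 p.2 = _
        rw [d_bisim τ ℓ hdistr hd hb]
        simp [bad0, pstep, hlp, hb]
      · show d p.1 p.2 = _
        have h1 : bad0 ℓ p = 0 := by simp [bad0, hlp]
        have h2 : pstep τ ℓ T D p = ∑' q : S × S, T p.1 p.2 q * d q.1 q.2 := by
          unfold pstep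
          rw [if_neg (by tauto)]
        have hle : (∑' q : S × S, T p.1 p.2 q * d q.1 q.2) ≤ d p.1 p.2 :=
          (hTspec p.1 p.2 hlp).2
        have hge : d p.1 p.2 ≤ ∑' q : S × S, T p.1 p.2 q * d q.1 q.2 := by
          have := delta_le_coupling τ ℓ hlp (hTspec p.1 p.2 hlp).1 (e := d)
          rw [hdΔ] at this
          exact this
        rw [h1, h2, zero_add]
        exact le_antisymm hge hle
  have honestep_one : one = fun p => abs0 τ ℓ p + pstep τ ℓ T one p := by
    funext p
    by_cases habs : Bisim τ ℓ p.1 p.2 ∨ ℓ p.1 ≠ ℓ p.2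
    · simp [hone, abs0, pstep, habs]
    · have hlp : ℓ p.1 = ℓ p.2 := by tauto
      have hnb : ¬ Bisim τ ℓ p.1 p.2 := by tauto
      have hmass : (∑' q : S × S, T p.1 p.2 q) = 1 := by
        have hc := (hTspec p.1 p.2 hlp).1
        rw [ENNReal.tsum_prod']
        calc (∑' u, ∑' v, T p.1 p.2 (u, v)) = ∑' u, τ p.1 u :=
          tsum_congr fun u => hc.1 u
        _ = 1 := hdistr p.1
      show (1 : ℝ≥0∞) = _
      simp only [abs0, pstep, if_neg habs, hone, mul_one, zero_add]
      exact hmass.symm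
  -- the n-step identities
  have hid : ∀ (e B : S × S → ℝ≥0∞), e = (fun p => B p + pstep τ ℓ T e p) →
      ∀ n p, e p = (∑ k ∈ Finset.range (n + 1), pstepN τ ℓ T k B p)
        + pstepN τ ℓ T (n + 1) e p := by
    intro e B hbase n
    induction n with
    | zero =>
      intro p
      have := congrFun hbase p
      simpa [pstepN] using this
    | succ n ih =>
      intro p
      have hstepid : pstepN τ ℓ T (n + 1) e p
          = pstepN τ ℓ T (n + 1) B p + pstepN τ ℓ T (n + 2) e p := by
        conv_lhs => rw [hbase]
        rw [pstepN_add τ ℓ T B (pstep τ ℓ T e) (n + 1)]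
        rw [pstepN_step_comm τ ℓ T e (n + 1)]
      rw [Finset.sum_range_succ]
      calc e p = (∑ k ∈ Finset.range (n + 1), pstepN τ ℓ T k B p)
          + pstepN τ ℓ T (n + 1) e p := ih p
      _ = (∑ k ∈ Finset.range (n + 1), pstepN τ ℓ T k B p)
          + (pstepN τ ℓ T (n + 1) B p + pstepN τ ℓ T (n + 2) e p) := by rw [hstepid]
      _ = ((∑ k ∈ Finset.range (n + 1), pstepN τ ℓ T k B p) + pstepN τ ℓ T (n + 1) B p)
          + pstepN τ ℓ T (n + 2) e p := by ring
  have hidd := hid D (bad0 ℓ) honestep_d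
  have hidone := hid one (abs0 τ ℓ) honestep_one
  -- comparison on A : abs0 = bad0 and ε ≤ D
  have habs_bad : ∀ k, pstepN τ ℓ T k (abs0 τ ℓ) (s, t) = pstepN τ ℓ T k (bad0 ℓ) (s, t) := by
    intro k
    have heqA : ∀ p ∈ A, abs0 τ ℓ p = bad0 ℓ p := by
      intro p hp
      have hnb := hAnb p hp
      by_cases hlp : ℓ p.1 ≠ ℓ p.2
      · simp [abs0, bad0, hlp]
      · simp [abs0, bad0, hlp, hnb]
    exact le_antisymm
      (pstepN_mono_on τ ℓ T A hcl (fun p hp => le_of_eq (heqA p hp)) k (s, t) hstA)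
      (pstepN_mono_on τ ℓ T A hcl (fun p hp => le_of_eq (heqA p hp).symm) k (s, t) hstA)
  have hcomp : ∀ k, ε * pstepN τ ℓ T k one (s, t) ≤ pstepN τ ℓ T k D (s, t) := by
    intro k
    have h1 : ∀ p ∈ A, (fun q => ε * one q) p ≤ D p := by
      intro p hp
      simpa [hone, hD] using (hAd p hp).le
    have h2 := pstepN_mono_on τ ℓ T A hcl h1 k (s, t) hstA
    rw [pstepN_mul τ ℓ T ε one k] at h2
    exact h2
  -- key inequality for every n
  set c : ℝ≥0∞ := ε * (1 - d s t) with hc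
  set Sn : ℕ → ℝ≥0∞ := fun n => ∑ k ∈ Finset.range (n + 1), pstepN τ ℓ T k (bad0 ℓ) (s, t)
    with hSn
  have hkey : ∀ n, Sn n + c ≤ d s t := by
    intro n
    have h1 : d s t = Sn n + pstepN τ ℓ T (n + 1) D (s, t) := hidd n (s, t)
    have hSled : Sn n ≤ d s t := h1 ▸ le_self_add
    have h2 : (1 : ℝ≥0∞) = (∑ k ∈ Finset.range (n + 1), pstepN τ ℓ T k (abs0 τ ℓ) (s, t))
        + pstepN τ ℓ T (n + 1) one (s, t) := hidone n (s, t)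
    have h2' : (1 : ℝ≥0∞) = Sn n + pstepN τ ℓ T (n + 1) one (s, t) := by
      rw [h2, hSn]
      congr 1
      exact Finset.sum_congr rfl fun k _ => habs_bad k
    have hsurv : 1 - d s t ≤ pstepN τ ℓ T (n + 1) one (s, t) := by
      rw [tsub_le_iff_right]
      calc (1 : ℝ≥0∞) = Sn n + pstepN τ ℓ T (n + 1) one (s, t) := h2'
      _ ≤ d s t + pstepN τ ℓ T (n + 1) one (s, t) := add_le_add_left hSled _
      _ = pstepN τ ℓ T (n + 1) one (s, t) + d s t := add_comm _ _
    have hstep1 : Sn n + c ≤ Sn n + ε * pstepN τ ℓ T (n + 1) one (s, t) :=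
      add_le_add_right (mul_le_mul_right hsurv ε) _
    have hstep2 : Sn n + ε * pstepN τ ℓ T (n + 1) one (s, t)
        ≤ Sn n + pstepN τ ℓ T (n + 1) D (s, t) := add_le_add_right (hcomp (n + 1)) _
    exact le_trans hstep1 (le_trans hstep2 (le_of_eq (hidd n (s, t)).symm))
  -- R := total reaching probability of differently labelled pairs
  set R : ℝ≥0∞ := ∑' n, pstepN τ ℓ T n (bad0 ℓ) (s, t) with hR
  have hRsup : R = ⨆ n, Sn n := by
    rw [hR, ENNReal.tsum_eq_iSup_nat]
    have hmono : Monotone fun n => ∑ k ∈ Finset.range n, pstepN τ ℓ T k (bad0 ℓ) (s, t) := by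
      intro a b hab
      exact Finset.sum_le_sum_of_subset (Finset.range_subset_range.2 hab)
    exact le_antisymm (iSup_le fun n => le_iSup_of_le n (hmono (Nat.le_succ n)))
      (iSup_le fun n => le_iSup_of_le (n + 1) le_rfl)
  have hRc : R + c ≤ d s t := by
    rw [hRsup, ENNReal.iSup_add]
    exact iSup_le hkey
  -- d s t ≤ R via the least fixed point property
  have hdleR : d s t ≤ R := by
    set Rf : S → S → ℝ≥0∞ := fun u v => ∑' n, pstepN τ ℓ T n (bad0 ℓ) (u, v) with hRf
    have hRf0 : ∀ p : S × S, Bisim τ ℓ p.1 p.2 → Rf p.1 p.2 = 0 := by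
      intro p hb
      rw [hRf]
      rw [ENNReal.tsum_eq_zero]
      intro n
      match n with
      | 0 =>
        show bad0 ℓ (p.1, p.2) = 0
        simp [bad0, bisim_label τ ℓ hb]
      | n + 1 =>
        show pstep τ ℓ T (pstepN τ ℓ T n (bad0 ℓ)) (p.1, p.2) = 0
        unfold pstep
        rw [if_pos (Or.inl (by simpa using hb))]
    have hΔRf : Delta τ ℓ Rf ≤ Rf := by
      intro u v
      by_cases hl : ℓ u ≠ ℓ v
      · have : Rf u v ≥ 1 := by
          refine le_trans (le_of_eq ?_) (ENNReal.le_tsum 0)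
          show (1 : ℝ≥0∞) = bad0 ℓ (u, v)
          simp [bad0, hl]
        calc Delta τ ℓ Rf u v ≤ 1 := by rw [Delta, if_pos hl]
        _ ≤ Rf u v := this
      · push_neg at hl
        by_cases hb : Bisim τ ℓ u v
        · obtain ⟨ω, hω, hsupp⟩ := bisim_coupling τ ℓ hdistr hb
          have h1 : Delta τ ℓ Rf u v ≤ ∑' p : S × S, ω p * Rf p.1 p.2 :=
            delta_le_coupling τ ℓ hl hω
          have h2 : (∑' p : S × S, ω p * Rf p.1 p.2) = 0 := by
            rw [ENNReal.tsum_eq_zero]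
            intro p
            by_cases h0 : ω p = 0
            · simp [h0]
            · rw [hRf0 p (hsupp p h0), mul_zero]
          rw [h2] at h1
          exact le_trans h1 zero_le
        · have hcoup := (hTspec u v hl).1
          have h1 : Delta τ ℓ Rf u v ≤ ∑' p : S × S, T u v p * Rf p.1 p.2 :=
            delta_le_coupling τ ℓ hl hcoup
          have h2 : (∑' p : S × S, T u v p * Rf p.1 p.2)
              = ∑' n, pstepN τ ℓ T (n + 1) (bad0 ℓ) (u, v) := by
            calc (∑' p : S × S, T u v p * Rf p.1 p.2)
                = ∑' p : S × S, ∑' n, T u v p * pstepN τ ℓ T n (bad0 ℓ) (p.1, p.2) := by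
                  exact tsum_congr fun p => by rw [hRf, ENNReal.tsum_mul_left]
            _ = ∑' n, ∑' p : S × S, T u v p * pstepN τ ℓ T n (bad0 ℓ) p := by
                  rw [ENNReal.tsum_comm]
            _ = ∑' n, pstepN τ ℓ T (n + 1) (bad0 ℓ) (u, v) := by
                  refine tsum_congr fun n => ?_
                  show _ = pstep τ ℓ T (pstepN τ ℓ T n (bad0 ℓ)) (u, v)
                  unfold pstep
                  rw [if_neg (by push_neg; exact ⟨by simpa using hb, by simpa using hl⟩)]
          have h3 : (∑' n, pstepN τ ℓ T (n + 1) (bad0 ℓ) (u, v)) ≤ Rf u v := by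
            rw [hRf]
            exact ENNReal.tsum_comp_le_tsum_of_injective Nat.succ_injective
              fun n => pstepN τ ℓ T n (bad0 ℓ) (u, v)
          exact le_trans h1 (le_trans (le_of_eq h2) h3)
    have := hd.2 Rf hΔRf s t
    rw [hR]
    exact this
  -- contradiction
  have hcne : c ≠ 0 := by
    rw [hc]
    exact mul_ne_zero hε.ne' (tsub_pos_of_lt hst).ne'
  have hdne : d s t ≠ ∞ := (lt_of_le_of_lt (hd1 s t) (by norm_num)).ne
  have : d s t < d s t + c := ENNReal.lt_add_right hdne hcne
  have hcontra : d s t + c ≤ d s t := le_trans (add_le_add_left hdleR c) hRc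
  exact absurd (lt_of_lt_of_le this hcontra) (lt_irrefl _)
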